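/- Let G be a directed multigraph (loops and parallel edges allowed) with a fixed ordering e_1, …, e_m of its edges, and let w_G be the associated vertex weighting. If every vertex of G has (undirected) degree at least δ, where a loop at v contributes one to the degree of v, then w_G(v) ≥ δ for every vertex v of G. -/

import Mathlib

namespace DirectedWeight

open scoped Classical

variable {V : Type*}

/-- There is a directed path (possibly empty) from `a` to `b` using the directed edges in
the list `es`. -/
def ReachIn (es : List (V × V)) (a b : V) : Prop :=
  Relation.ReflTransGen (fun u w => (u, w) ∈ es) a b

/-- Auxiliary weight function: the input list holds the edges in *reverse* order (most
recent edge `e_i` first).  Adding the edge `e_i = (x, y)` increases the weight of `x`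
by one and raises the weight of every vertex reachable from `x` to at least the new
weight of `x`. -/
noncomputable def weightAux : List (V × V) → V → ℕ
  | [], _ => 0
  | (x, y) :: es, v =>
      if v = x then weightAux es x + 1
      else if ReachIn ((x, y) :: es) x v then max (weightAux es x + 1) (weightAux es v)
      else weightAux es v

/-- The weight function `w_G` associated to a directed multigraph given by its edge list
`es = [e_1, …, e_m]` (in this order). -/
noncomputable def weight (es : List (V × V)) : V → ℕ := weightAux es.reverse

/-- The (undirected) degree of `v` in the directed multigraph with edge list `es`; a loop
at `v` contributes one. -/
noncomputable def degree (es : List (V × V)) (v : V) : ℕ :=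
  (es.filter fun p => decide (p.1 = v ∨ p.2 = v)).length

end DirectedWeight

namespace DirectedWeight

open scoped Classical

variable {V : Type*}

lemma reachIn_cons (e : V × V) {es : List (V × V)} {a b : V} (h : ReachIn es a b) :
    ReachIn (e :: es) a b :=
  Relation.ReflTransGen.mono (fun _ _ hm => List.mem_cons_of_mem _ hm) _ _ h

lemma reachIn_edge (x y : V) (es : List (V × V)) : ReachIn ((x, y) :: es) x y :=
  Relation.ReflTransGen.single List.mem_cons_self

lemma weightAux_le_cons (e : V × V) (es : List (V × V)) (v : V) :
    weightAux es v ≤ weightAux (e :: es) v := by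
  obtain ⟨x, y⟩ := e
  simp only [weightAux]
  split_ifs with h1 h2
  · subst h1; exact Nat.le_succ _
  · exact le_max_right _ _
  · exact le_refl _

lemma weightAux_tail_le {x y : V} {es : List (V × V)} {v : V}
    (h : ReachIn ((x, y) :: es) x v) :
    weightAux es x + 1 ≤ weightAux ((x, y) :: es) v := by
  simp only [weightAux]
  split_ifs with h1
  · subst h1; exact le_refl _
  · exact le_max_left _ _

lemma degree_append (A B : List (V × V)) (v : V) :
    degree (A ++ B) v = degree A v + degree B v := by
  simp [degree, List.filter_append]

lemma degree_cons (x y : V) (S : List (V × V)) (z : V) :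
    degree ((x, y) :: S) z = degree S z + (if x = z ∨ y = z then 1 else 0) := by
  simp only [degree, List.filter_cons]
  by_cases h : x = z ∨ y = z <;> simp [h]

lemma main_aux (δ : ℕ) (M : List (V × V)) :
    ∀ (S : List (V × V)), (∀ v : V, δ ≤ degree (M.reverse ++ S) v) →
    ∀ u : V, ∃ z, ReachIn M z u ∧ δ ≤ weightAux M u + degree S z := by
  induction M with
  | nil =>
    intro S hdeg u
    exact ⟨u, Relation.ReflTransGen.refl, by simpa [weightAux] using hdeg u⟩
  | cons e M' ih =>
    intro S hdeg u
    obtain ⟨x, y⟩ := e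
    have hdeg' : ∀ v : V, δ ≤ degree (M'.reverse ++ ((x, y) :: S)) v := by
      intro v
      have h := hdeg v
      rw [List.reverse_cons, List.append_assoc] at h
      simpa using h
    obtain ⟨z₀, hz₀r, hz₀⟩ := ih ((x, y) :: S) hdeg' u
    by_cases hinc : x = z₀ ∨ y = z₀
    · obtain ⟨z₁, hz₁r, hz₁⟩ := ih ((x, y) :: S) hdeg' x
      have hxu : ReachIn ((x, y) :: M') x u := by
        rcases hinc with h | h
        · subst h; exact reachIn_cons _ hz₀r
        · subst h; exact (reachIn_edge x y M').trans (reachIn_cons _ hz₀r)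
      refine ⟨z₁, (reachIn_cons _ hz₁r).trans hxu, ?_⟩
      have h1 : degree ((x, y) :: S) z₁ ≤ degree S z₁ + 1 := by
        rw [degree_cons]; split_ifs <;> omega
      have h2 : weightAux M' x + 1 ≤ weightAux ((x, y) :: M') u := weightAux_tail_le hxu
      omega
    · have hdz : degree ((x, y) :: S) z₀ = degree S z₀ := by
        rw [degree_cons, if_neg hinc, Nat.add_zero]
      rw [hdz] at hz₀
      have h2 : weightAux M' u ≤ weightAux ((x, y) :: M') u := weightAux_le_cons _ _ _
      exact ⟨z₀, reachIn_cons _ hz₀r, by omega⟩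

end DirectedWeight

open DirectedWeight in
/-- **Lemma 13.** If every vertex of a directed multigraph `G` (given by its ordered edge
list `es`, loops and parallel edges allowed) has degree at least `δ`, where a loop
contributes one to the degree, then `w_G(v) ≥ δ` for every vertex `v`. -/
theorem weight_ge_of_min_degree {V : Type*} (es : List (V × V)) (δ : ℕ)
    (hdeg : ∀ v : V, δ ≤ degree es v) :
    ∀ v : V, δ ≤ weight es v := by
  intro v
  have h : ∀ w : V, δ ≤ degree (es.reverse.reverse ++ ([] : List (V × V))) w := by
    simpa using hdeg
  obtain ⟨z, _, hz⟩ := DirectedWeight.main_aux δ es.reverse [] h v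
  simpa [DirectedWeight.weight, DirectedWeight.degree] using hz
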